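/- Let X and Y be Hausdorff topological spaces with Cantor–Bendixson ranks rank_CB(X) = n+1 and rank_CB(Y) = m+1 for natural numbers m, n. Then the Cantor–Bendixson rank of the product space X × Y equals m + n + 1, i.e. rank_CB(X × Y) = rank_CB(X) + rank_CB(Y) − 1. -/

import Mathlib

open Filter Set Topology

/-- The Cantor–Bendixson derivative of a set `A`: the set of points of `A` that are not
isolated in the subspace `A`, i.e. the points of `A` that are accumulation points of `A`. -/
def cbDeriv {X : Type*} [TopologicalSpace X] (A : Set X) : Set X :=
  {x ∈ A | AccPt x (Filter.principal A)}

/-- The finite Cantor–Bendixson derivatives of the space: `cbIter X k = X^(k)`,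
obtained by iterating the Cantor–Bendixson derivative `k` times starting from `X^(0) = X`. -/
def cbIter (X : Type*) [TopologicalSpace X] (k : ℕ) : Set X :=
  cbDeriv^[k] Set.univ

/-- `X` has Cantor–Bendixson rank equal to the (finite) ordinal `k`: the Cantor–Bendixson
process stabilises at stage `k` (hence at every later stage, finite or transfinite, since the
derivative is a fixed operation and the stages are decreasing) and at no earlier stage. -/
def cbRankEq (X : Type*) [TopologicalSpace X] (k : ℕ) : Prop :=
  cbIter X (k + 1) = cbIter X k ∧ ∀ j < k, cbIter X (j + 1) ≠ cbIter X j

lemma aux_compl_singleton_prod {X Y : Type*} (x : X) (y : Y) :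
    ({(x, y)}ᶜ : Set (X × Y)) = ({x}ᶜ ×ˢ univ) ∪ (univ ×ˢ {y}ᶜ) := by
  ext p
  simp [Prod.ext_iff, or_iff_not_imp_left, not_and_or]

lemma aux_accPt_prod {X Y : Type*} [TopologicalSpace X] [TopologicalSpace Y]
    (x : X) (y : Y) (A : Set X) (B : Set Y) :
    AccPt (x, y) (𝓟 (A ×ˢ B)) ↔
      (AccPt x (𝓟 A) ∧ ClusterPt y (𝓟 B)) ∨ (ClusterPt x (𝓟 A) ∧ AccPt y (𝓟 B)) := by
  have : 𝓝[≠] (x, y) ⊓ 𝓟 (A ×ˢ B) =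
      ((𝓝 x ⊓ 𝓟 {x}ᶜ ⊓ 𝓟 A) ×ˢ (𝓝 y ⊓ 𝓟 B)) ⊔ ((𝓝 x ⊓ 𝓟 A) ×ˢ (𝓝 y ⊓ 𝓟 {y}ᶜ ⊓ 𝓟 B)) := by
    rw [nhdsWithin, nhds_prod_eq, aux_compl_singleton_prod, ← Filter.sup_principal,
      ← Filter.prod_principal_principal, ← Filter.prod_principal_principal,
      ← Filter.prod_principal_principal, inf_sup_left, inf_sup_right,
      Filter.prod_inf_prod, Filter.prod_inf_prod, Filter.prod_inf_prod, Filter.prod_inf_prod]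
    simp [principal_univ]
  rw [AccPt, this, sup_neBot, Filter.prod_neBot, Filter.prod_neBot]
  rfl

lemma aux_derivedSet_prod {X Y : Type*} [TopologicalSpace X] [TopologicalSpace Y]
    (A : Set X) (B : Set Y) :
    derivedSet (A ×ˢ B) = (derivedSet A ×ˢ closure B) ∪ (closure A ×ˢ derivedSet B) := by
  ext ⟨x, y⟩
  simp [mem_derivedSet, aux_accPt_prod, mem_closure_iff_clusterPt]

lemma aux_cbDeriv_of_closed {X : Type*} [TopologicalSpace X] {A : Set X}
    (hA : IsClosed A) : cbDeriv A = derivedSet A := by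
  ext x
  simp only [cbDeriv, mem_setOf_eq, mem_derivedSet, and_iff_right_iff_imp]
  intro hx
  exact hA.closure_subset (derivedSet_subset_closure A hx)

lemma aux_derivedSet_empty {X : Type*} [TopologicalSpace X] :
    derivedSet (∅ : Set X) = ∅ := by
  ext x
  simp [mem_derivedSet, AccPt]

/-- In a T1 space, `cbIter` is closed and given by iterating `derivedSet`. -/
lemma aux_cbIter_closed_and_succ (X : Type*) [TopologicalSpace X] [T1Space X] (k : ℕ) :
    IsClosed (cbIter X k) ∧ cbIter X (k + 1) = derivedSet (cbIter X k) := by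
  induction k with
  | zero =>
    refine ⟨isClosed_univ, ?_⟩
    rw [cbIter, Function.iterate_one, aux_cbDeriv_of_closed isClosed_univ]
    rfl
  | succ k ih =>
    have h1 : IsClosed (cbIter X (k + 1)) := ih.2 ▸ isClosed_derivedSet _
    refine ⟨h1, ?_⟩
    rw [cbIter, Function.iterate_succ_apply', ← cbIter, aux_cbDeriv_of_closed h1]

lemma aux_cbIter_succ (X : Type*) [TopologicalSpace X] [T1Space X] (k : ℕ) :
    cbIter X (k + 1) = derivedSet (cbIter X k) :=
  (aux_cbIter_closed_and_succ X k).2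

lemma aux_cbIter_closed (X : Type*) [TopologicalSpace X] [T1Space X] (k : ℕ) :
    IsClosed (cbIter X k) :=
  (aux_cbIter_closed_and_succ X k).1

lemma aux_cbIter_antitone (X : Type*) [TopologicalSpace X] [T1Space X] (k : ℕ) :
    cbIter X (k + 1) ⊆ cbIter X k := by
  rw [aux_cbIter_succ]
  exact (derivedSet_subset_closure _).trans (aux_cbIter_closed X k).closure_subset

/-- Stabilisation: if the chain stabilises at `k`, it's constant from `k` on. -/
lemma aux_cbIter_stable (X : Type*) [TopologicalSpace X] [T1Space X] (k : ℕ)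
    (h : cbIter X (k + 1) = cbIter X k) (l : ℕ) (hl : k ≤ l) : cbIter X l = cbIter X k := by
  induction l with
  | zero => rw [Nat.le_zero.mp hl]
  | succ l ih =>
    rcases Nat.lt_or_ge k (l + 1) with h' | h'
    · have hkl : k ≤ l := Nat.lt_succ_iff.mp h'
      have := ih hkl
      rw [aux_cbIter_succ, this, ← aux_cbIter_succ, h]
    · have : k = l + 1 := le_antisymm hl h'
      rw [this]

/-- The key product formula. -/
lemma aux_cbIter_prod (X Y : Type*) [TopologicalSpace X] [T1Space X]
    [TopologicalSpace Y] [T1Space Y] (k : ℕ) :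
    cbIter (X × Y) k = ⋃ i ∈ Finset.range (k + 1), cbIter X i ×ˢ cbIter Y (k - i) := by
  induction k with
  | zero =>
    simp [cbIter, Set.univ_prod_univ]
  | succ k ih =>
    rw [aux_cbIter_succ, ih]
    have hds : derivedSet (⋃ i ∈ Finset.range (k + 1), cbIter X i ×ˢ cbIter Y (k - i)) =
        ⋃ i ∈ Finset.range (k + 1), derivedSet (cbIter X i ×ˢ cbIter Y (k - i)) := by
      classical
      induction (Finset.range (k + 1)) using Finset.induction with
      | empty => simp [aux_derivedSet_empty]
      | insert a s hx ih' =>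
        rw [Finset.set_biUnion_insert, derivedSet_union, ih', Finset.set_biUnion_insert]
    rw [hds]
    ext ⟨x, y⟩
    simp only [aux_derivedSet_prod, ← aux_cbIter_succ,
      (aux_cbIter_closed X _).closure_eq, (aux_cbIter_closed Y _).closure_eq,
      mem_iUnion, Finset.mem_range, mem_union, mem_prod, exists_prop]
    constructor
    · rintro ⟨i, hi, ⟨hx, hy⟩ | ⟨hx, hy⟩⟩
      · exact ⟨i + 1, by omega, hx, by rwa [show k + 1 - (i + 1) = k - i by omega]⟩
      · exact ⟨i, by omega, hx, by rwa [show k + 1 - i = k - i + 1 by omega]⟩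
    · rintro ⟨i, hi, hx, hy⟩
      match i with
      | 0 => exact ⟨0, by omega, Or.inr ⟨hx, by rwa [show k - 0 + 1 = k + 1 - 0 by omega]⟩⟩
      | j + 1 =>
        exact ⟨j, by omega, Or.inl ⟨hx, by rwa [show k - j = k + 1 - (j + 1) by omega]⟩⟩

/-- If `X` and `Y` are Hausdorff spaces with Cantor–Bendixson ranks `n+1`
and `m+1`, then the product `X × Y` has Cantor–Bendixson rank `n + m + 1`
(that is, `rank_CB(X) + rank_CB(Y) − 1`). -/
theorem stmt0 {X Y : Type*} [TopologicalSpace X] [T2Space X]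
    [TopologicalSpace Y] [T2Space Y] (n m : ℕ)
    (hX : cbRankEq X (n + 1)) (hY : cbRankEq Y (m + 1)) :
    cbRankEq (X × Y) (n + m + 1) := by
  obtain ⟨hXs, hXne⟩ := hX
  obtain ⟨hYs, hYne⟩ := hY
  have hXst : ∀ l, n + 1 ≤ l → cbIter X l = cbIter X (n + 1) :=
    aux_cbIter_stable X (n + 1) hXs
  have hYst : ∀ l, m + 1 ≤ l → cbIter Y l = cbIter Y (m + 1) :=
    aux_cbIter_stable Y (m + 1) hYs
  constructor
  · -- stabilisation at n + m + 1
    apply Set.Subset.antisymm (aux_cbIter_antitone _ _)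
    rw [aux_cbIter_prod, aux_cbIter_prod]
    intro p hp
    simp only [mem_iUnion, Finset.mem_range, exists_prop] at hp ⊢
    obtain ⟨i, hi, hpx, hpy⟩ := (by simpa [Set.mem_prod] using hp :
      ∃ i, i < n + m + 1 + 1 ∧ p.1 ∈ cbIter X i ∧ p.2 ∈ cbIter Y (n + m + 1 - i))
    rcases Nat.lt_or_ge i (n + 1) with h | h
    · -- then n + m + 1 - i ≥ m + 1, so Y side is stable; bump j
      refine ⟨i, by omega, ?_⟩
      have h1 : cbIter Y (n + m + 1 + 1 - i) = cbIter Y (m + 1) := hYst _ (by omega)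
      have h2 : cbIter Y (n + m + 1 - i) = cbIter Y (m + 1) := hYst _ (by omega)
      exact Set.mem_prod.mpr ⟨hpx, by rw [h1, ← h2]; exact hpy⟩
    · -- X side stable; bump i
      refine ⟨i + 1, by omega, ?_⟩
      have h1 : cbIter X (i + 1) = cbIter X (n + 1) := hXst _ (by omega)
      have h2 : cbIter X i = cbIter X (n + 1) := hXst _ (by omega)
      refine Set.mem_prod.mpr ⟨by rw [h1, ← h2]; exact hpx, ?_⟩
      rwa [show n + m + 1 + 1 - (i + 1) = n + m + 1 - i by omega]
  · -- strictness
    intro j hj h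
    -- pick i ≤ n, jj ≤ m with i + jj = j
    set i := min j n with hi
    set jj := j - i with hjj
    have hin : i ≤ n := min_le_right _ _
    have hjm : jj ≤ m := by omega
    have hij : i + jj = j := by omega
    -- witnesses
    have hxne : cbIter X (i + 1) ≠ cbIter X i := hXne i (by omega)
    have hyne : cbIter Y (jj + 1) ≠ cbIter Y jj := hYne jj (by omega)
    obtain ⟨x, hx, hx'⟩ : ∃ x, x ∈ cbIter X i ∧ x ∉ cbIter X (i + 1) := by
      by_contra hc
      push_neg at hc
      exact hxne (Set.Subset.antisymm (aux_cbIter_antitone X i) hc)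
    obtain ⟨y, hy, hy'⟩ : ∃ y, y ∈ cbIter Y jj ∧ y ∉ cbIter Y (jj + 1) := by
      by_contra hc
      push_neg at hc
      exact hyne (Set.Subset.antisymm (aux_cbIter_antitone Y jj) hc)
    have hmem : (x, y) ∈ cbIter (X × Y) j := by
      rw [aux_cbIter_prod]
      simp only [mem_iUnion, Finset.mem_range, exists_prop]
      exact ⟨i, by omega, Set.mem_prod.mpr ⟨hx, by rwa [show j - i = jj from rfl]⟩⟩
    rw [← h, aux_cbIter_prod] at hmem
    simp only [mem_iUnion, Finset.mem_range, exists_prop, Set.mem_prod] at hmem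
    obtain ⟨i', hi', hxi, hyi⟩ := hmem
    -- i' + (j + 1 - i') = j + 1, so either i' ≥ i + 1 or j + 1 - i' ≥ jj + 1
    have hantiX : Antitone (cbIter X) := antitone_nat_of_succ_le (aux_cbIter_antitone X)
    have hantiY : Antitone (cbIter Y) := antitone_nat_of_succ_le (aux_cbIter_antitone Y)
    rcases Nat.lt_or_ge i' (i + 1) with hc | hc
    · exact hy' (hantiY (show jj + 1 ≤ j + 1 - i' by omega) hyi)
    · exact hx' (hantiX (show i + 1 ≤ i' by omega) hxi)
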